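/- Let p \ge 3 be a prime. Then p divides !p (where !p = \sum_{k=0}^{p-1} k!) if and only if p divides the derangement number S_{p-1}. -/

import Mathlib

lemma asc_mod (p : ℕ) (hp : p.Prime) : ∀ m, m < p →
    ((Nat.ascFactorial (p - m) m : ZMod p)) = (-1)^m * (m.factorial : ZMod p) := by
  intro m
  induction m with
  | zero => simp
  | succ m ih =>
    intro hm
    have hm' : m < p := Nat.lt_of_succ_lt hm
    have hs := Nat.succ_ascFactorial (p - (m+1)) m
    have h1 : (p - (m + 1)).succ = p - m := by omega
    rw [h1] at hs
    have h2 : (p - (m + 1)).ascFactorial (m + 1)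
        = (p - (m + 1)) * (p - m).ascFactorial m := by
      rw [Nat.ascFactorial_succ, hs]
    have h0 : ((p - (m + 1) : ℕ) : ZMod p) + ((m : ZMod p) + 1) = 0 := by
      have h : ((p - (m + 1) + (m + 1) : ℕ) : ZMod p) = 0 := by
        rw [show p - (m+1) + (m+1) = p by omega]
        simp
      push_cast at h
      linear_combination h
    have h3 : ((p - (m + 1) : ℕ) : ZMod p) = -((m : ZMod p) + 1) := by
      linear_combination h0
    rw [h2]
    push_cast
    rw [h3, ih hm', Nat.factorial_succ]
    push_cast
    ring

theorem prime_dvd_leftFactorial_iff_dvd_derangement (p : ℕ) (hp : p.Prime) (hp3 : 3 ≤ p) :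
    p ∣ (∑ k ∈ Finset.range p, k.factorial) ↔ p ∣ numDerangements (p - 1) := by
  have hkey : ((numDerangements (p-1) : ℕ) : ZMod p) = ((∑ k ∈ Finset.range p, k.factorial : ℕ) : ZMod p) := by
    have h := numDerangements_sum (p - 1)
    have hcast := congrArg (fun z : ℤ => (z : ZMod p)) h
    simp only [Int.cast_natCast] at hcast
    rw [hcast, show p - 1 + 1 = p by omega]
    push_cast
    have hterm : ∀ k ∈ Finset.range p,
        (-1 : ZMod p)^k * ((k+1).ascFactorial (p-1-k) : ZMod p)
          = ((p-1-k).factorial : ZMod p) := by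
      intro k hk
      have hk' : k < p := Finset.mem_range.mp hk
      have hlt : p - 1 - k < p := by omega
      have ha := asc_mod p hp (p - 1 - k) hlt
      rw [show p - (p - 1 - k) = k + 1 by omega] at ha
      rw [ha, ← mul_assoc, ← pow_add, show k + (p-1-k) = p - 1 by omega]
      have hev : Even (p - 1) := by
        have := hp.odd_of_ne_two (by omega)
        rcases this with ⟨t, ht⟩
        exact ⟨t, by omega⟩
      rw [hev.neg_one_pow, one_mul]
    rw [Finset.sum_congr rfl hterm]
    exact Finset.sum_range_reflect (fun j => ((j.factorial : ZMod p))) p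
  constructor
  · intro h
    have := (ZMod.natCast_eq_zero_iff _ p).mpr h
    rw [← hkey] at this
    exact (ZMod.natCast_eq_zero_iff _ p).mp this
  · intro h
    have := (ZMod.natCast_eq_zero_iff _ p).mpr h
    rw [hkey] at this
    exact (ZMod.natCast_eq_zero_iff _ p).mp this
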